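/- arXiv:1805.01018 — 2 statements merged into one kernel-verified Lean document; each statement's English description precedes it below -/
import Mathlib

section
/- For bounded operators A, X on a reproducing kernel Hilbert space, ber(AX ± XA) ≤ ber(A*A + X*X)^{1/2} · ber(AA* + XX*)^{1/2}. -/
variable {E : Type*} [NormedAddCommGroup E] [InnerProductSpace ℂ E] [CompleteSpace E] {Ω : Type*}

/-- Berezin number of `A` w.r.t. the family of normalized reproducing kernels `k`. -/
noncomputable def ber (k : Ω → E) (A : E →L[ℂ] E) : ℝ :=
  ⨆ p : Ω, ‖(inner ℂ (A (k p)) (k p) : ℂ)‖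

noncomputable def adj (A : E →L[ℂ] E) : E →L[ℂ] E := ContinuousLinearMap.adjoint A

/-- Real part `(T + T*)/2`. -/
noncomputable def reOp (T : E →L[ℂ] E) : E →L[ℂ] E := (2 : ℂ)⁻¹ • (T + adj T)

/-- Imaginary part `(T - T*)/(2i)`. -/
noncomputable def imOp (T : E →L[ℂ] E) : E →L[ℂ] E := (2 * Complex.I)⁻¹ • (T - adj T)

/-- `|X| = (X*X)^{1/2}`. -/
noncomputable def absOp (X : E →L[ℂ] E) : E →L[ℂ] E := CFC.sqrt (adj X * X)

lemma ber_bdd (k : Ω → E) (hk : ∀ p, ‖k p‖ = 1) (T : E →L[ℂ] E) :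
    BddAbove (Set.range fun p : Ω => ‖(inner ℂ (T (k p)) (k p) : ℂ)‖) := by
  refine ⟨‖T‖, ?_⟩
  rintro x ⟨p, rfl⟩
  calc ‖(inner ℂ (T (k p)) (k p) : ℂ)‖ ≤ ‖T (k p)‖ * ‖k p‖ := norm_inner_le_norm _ _
    _ ≤ (‖T‖ * ‖k p‖) * ‖k p‖ := by gcongr; exact T.le_opNorm _
    _ = ‖T‖ := by rw [hk p]; ring

lemma le_ber (k : Ω → E) (hk : ∀ p, ‖k p‖ = 1) (T : E →L[ℂ] E) (p : Ω) :
    ‖(inner ℂ (T (k p)) (k p) : ℂ)‖ ≤ ber k T :=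
  le_ciSup (ber_bdd k hk T) p

lemma sum_sq_key (k : Ω → E) (hk : ∀ p, ‖k p‖ = 1) (A X : E →L[ℂ] E) (p : Ω) :
    ‖A (k p)‖ ^ 2 + ‖X (k p)‖ ^ 2 ≤ ber k (adj A * A + adj X * X) := by
  have h := le_ber k hk (adj A * A + adj X * X) p
  have e : (inner ℂ (((adj A * A + adj X * X)) (k p)) (k p) : ℂ)
      = ((‖A (k p)‖ ^ 2 + ‖X (k p)‖ ^ 2 : ℝ) : ℂ) := by
    simp only [ContinuousLinearMap.add_apply, ContinuousLinearMap.mul_apply, inner_add_left, adj,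
      ContinuousLinearMap.adjoint_inner_left]
    rw [inner_self_eq_norm_sq_to_K (𝕜 := ℂ), inner_self_eq_norm_sq_to_K (𝕜 := ℂ)]
    push_cast; ring_nf; norm_cast
  rw [e, Complex.norm_real, Real.norm_of_nonneg (by positivity)] at h
  exact h

theorem stmt7 (k : Ω → E) (hk : ∀ p, ‖k p‖ = 1) (A X : E →L[ℂ] E) :
    ber k (A * X + X * A) ≤ Real.sqrt (ber k (adj A * A + adj X * X)) * Real.sqrt (ber k (A * adj A + X * adj X)) ∧
    ber k (A * X - X * A) ≤ Real.sqrt (ber k (adj A * A + adj X * X)) * Real.sqrt (ber k (A * adj A + X * adj X)) := by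
  set B1 := ber k (adj A * A + adj X * X) with hB1
  set B2 := ber k (A * adj A + X * adj X) with hB2
  have key : ∀ p : Ω, ‖(inner ℂ ((A * X) (k p)) (k p) : ℂ)‖ + ‖(inner ℂ ((X * A) (k p)) (k p) : ℂ)‖
      ≤ Real.sqrt B1 * Real.sqrt B2 := by
    intro p
    set u := k p
    have h1 : ‖A u‖ ^ 2 + ‖X u‖ ^ 2 ≤ B1 := sum_sq_key k hk A X p
    have h2' : ‖adj A u‖ ^ 2 + ‖adj X u‖ ^ 2 ≤ B2 := by
      have := sum_sq_key k hk (adj A) (adj X) p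
      simpa [adj, ContinuousLinearMap.adjoint_adjoint, hB2, u] using this
    have e1 : (inner ℂ ((A * X) u) u : ℂ) = inner ℂ (X u) (adj A u) := by
      simp [adj, ContinuousLinearMap.adjoint_inner_right]
    have e2 : (inner ℂ ((X * A) u) u : ℂ) = inner ℂ (A u) (adj X u) := by
      simp [adj, ContinuousLinearMap.adjoint_inner_right]
    have n1 : ‖(inner ℂ ((A * X) u) u : ℂ)‖ ≤ ‖X u‖ * ‖adj A u‖ := by
      rw [e1]; exact norm_inner_le_norm _ _
    have n2 : ‖(inner ℂ ((X * A) u) u : ℂ)‖ ≤ ‖A u‖ * ‖adj X u‖ := by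
      rw [e2]; exact norm_inner_le_norm _ _
    have cs : ‖X u‖ * ‖adj A u‖ + ‖A u‖ * ‖adj X u‖
        ≤ Real.sqrt (‖A u‖ ^ 2 + ‖X u‖ ^ 2) * Real.sqrt (‖adj A u‖ ^ 2 + ‖adj X u‖ ^ 2) := by
      rw [← Real.sqrt_mul (by positivity)]
      have h0 : 0 ≤ ‖X u‖ * ‖adj A u‖ + ‖A u‖ * ‖adj X u‖ := by positivity
      have hmul : (‖X u‖ * ‖adj A u‖ + ‖A u‖ * ‖adj X u‖) ^ 2
          ≤ (‖A u‖ ^ 2 + ‖X u‖ ^ 2) * (‖adj A u‖ ^ 2 + ‖adj X u‖ ^ 2) := by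
        nlinarith [sq_nonneg (‖A u‖ * ‖adj A u‖ - ‖X u‖ * ‖adj X u‖)]
      calc ‖X u‖ * ‖adj A u‖ + ‖A u‖ * ‖adj X u‖
          = Real.sqrt ((‖X u‖ * ‖adj A u‖ + ‖A u‖ * ‖adj X u‖) ^ 2) := (Real.sqrt_sq h0).symm
        _ ≤ _ := Real.sqrt_le_sqrt hmul
    calc ‖(inner ℂ ((A * X) u) u : ℂ)‖ + ‖(inner ℂ ((X * A) u) u : ℂ)‖
        ≤ ‖X u‖ * ‖adj A u‖ + ‖A u‖ * ‖adj X u‖ := add_le_add n1 n2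
      _ ≤ Real.sqrt (‖A u‖ ^ 2 + ‖X u‖ ^ 2) * Real.sqrt (‖adj A u‖ ^ 2 + ‖adj X u‖ ^ 2) := cs
      _ ≤ Real.sqrt B1 * Real.sqrt B2 :=
          mul_le_mul (Real.sqrt_le_sqrt h1) (Real.sqrt_le_sqrt h2')
            (Real.sqrt_nonneg _) (Real.sqrt_nonneg _)
  constructor
  · apply Real.iSup_le _ (by positivity)
    intro p
    calc ‖(inner ℂ ((A * X + X * A) (k p)) (k p) : ℂ)‖
        ≤ ‖(inner ℂ ((A * X) (k p)) (k p) : ℂ)‖ + ‖(inner ℂ ((X * A) (k p)) (k p) : ℂ)‖ := by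
          rw [ContinuousLinearMap.add_apply, inner_add_left]; exact norm_add_le _ _
      _ ≤ _ := key p
  · apply Real.iSup_le _ (by positivity)
    intro p
    calc ‖(inner ℂ ((A * X - X * A) (k p)) (k p) : ℂ)‖
        ≤ ‖(inner ℂ ((A * X) (k p)) (k p) : ℂ)‖ + ‖(inner ℂ ((X * A) (k p)) (k p) : ℂ)‖ := by
          rw [ContinuousLinearMap.sub_apply, inner_sub_left]; exact norm_sub_le _ _
      _ ≤ _ := key p
end

section
/- For bounded operators A, B, X on a reproducing kernel Hilbert space, ber(A*XB)² ≤ ‖X‖² · ber(A*A) · ber(B*B). -/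
variable {E : Type*} [NormedAddCommGroup E] [InnerProductSpace ℂ E] [CompleteSpace E] {Ω : Type*}

lemma ber_nonneg (k : Ω → E) (T : E →L[ℂ] E) : 0 ≤ ber k T :=
  Real.iSup_nonneg fun _ => norm_nonneg _

lemma norm_apply_le_sqrt_ber (k : Ω → E) (hk : ∀ p, ‖k p‖ = 1) (A : E →L[ℂ] E) (p : Ω) :
    ‖A (k p)‖ ≤ Real.sqrt (ber k (adj A * A)) := by
  have hbdd : BddAbove (Set.range fun q => ‖(inner ℂ ((adj A * A) (k q)) (k q) : ℂ)‖) := by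
    refine ⟨‖adj A * A‖, ?_⟩
    rintro _ ⟨q, rfl⟩
    calc ‖(inner ℂ ((adj A * A) (k q)) (k q) : ℂ)‖
        ≤ ‖(adj A * A) (k q)‖ * ‖k q‖ := norm_inner_le_norm _ _
      _ ≤ ‖adj A * A‖ * ‖k q‖ * ‖k q‖ := by
          gcongr; exact (adj A * A).le_opNorm _
      _ = ‖adj A * A‖ := by rw [hk q]; ring
  have hle : ‖(inner ℂ ((adj A * A) (k p)) (k p) : ℂ)‖ ≤ ber k (adj A * A) :=
    le_ciSup hbdd p
  have hval : (inner ℂ ((adj A * A) (k p)) (k p) : ℂ) = inner ℂ (A (k p)) (A (k p)) := by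
    simp only [ContinuousLinearMap.mul_apply, adj]
    exact ContinuousLinearMap.adjoint_inner_left A _ _
  rw [hval] at hle
  rw [inner_self_eq_norm_sq_to_K] at hle
  have h2 : ‖A (k p)‖ ^ 2 ≤ ber k (adj A * A) := by
    simpa [Complex.norm_real, abs_of_nonneg (norm_nonneg _)] using hle
  exact (Real.le_sqrt (norm_nonneg _) (ber_nonneg k _)).mpr h2

theorem stmt11 (k : Ω → E) (hk : ∀ p, ‖k p‖ = 1) (A B X : E →L[ℂ] E) :
    (ber k (adj A * X * B)) ^ 2 ≤ ‖X‖ ^ 2 * ber k (adj A * A) * ber k (adj B * B) := by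
  set a := ber k (adj A * A) with ha
  set b := ber k (adj B * B) with hb
  have ha0 : 0 ≤ a := ber_nonneg k _
  have hb0 : 0 ≤ b := ber_nonneg k _
  have key : ber k (adj A * X * B) ≤ ‖X‖ * (Real.sqrt a * Real.sqrt b) := by
    refine Real.iSup_le (fun p => ?_) (by positivity)
    have hval : (inner ℂ ((adj A * X * B) (k p)) (k p) : ℂ) = inner ℂ (X (B (k p))) (A (k p)) := by
      simp only [ContinuousLinearMap.mul_apply, adj]
      exact ContinuousLinearMap.adjoint_inner_left A _ _
    rw [hval]
    calc ‖(inner ℂ (X (B (k p))) (A (k p)) : ℂ)‖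
        ≤ ‖X (B (k p))‖ * ‖A (k p)‖ := norm_inner_le_norm _ _
      _ ≤ (‖X‖ * ‖B (k p)‖) * ‖A (k p)‖ := by gcongr; exact X.le_opNorm _
      _ ≤ (‖X‖ * Real.sqrt b) * Real.sqrt a := by
          gcongr
          · exact norm_apply_le_sqrt_ber k hk B p
          · exact norm_apply_le_sqrt_ber k hk A p
      _ = ‖X‖ * (Real.sqrt a * Real.sqrt b) := by ring
  calc (ber k (adj A * X * B)) ^ 2
      ≤ (‖X‖ * (Real.sqrt a * Real.sqrt b)) ^ 2 := by
        apply sq_le_sq' _ key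
        have := ber_nonneg k (adj A * X * B)
        nlinarith [key, Real.sqrt_nonneg a, Real.sqrt_nonneg b, norm_nonneg X]
    _ = ‖X‖ ^ 2 * a * b := by
        rw [mul_pow, mul_pow, Real.sq_sqrt ha0, Real.sq_sqrt hb0]; ring
end
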